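/- Let Q : ℕ → ℕ → ℚ satisfy: (i) Q(0,f) = (if f = 1 then 1 else 0) and Q(n,0) = 0; (ii) the cut-and-slide formula: for all n, f ≥ 1, (f−1)·Q(n,f) = Σ_{i+j=n−1} Σ_{f1+f2=f, f1,f2≥1} (2+i−f1)·Q(i,f1)·(2j+1)·Q(j,f2); (iii) the generalized Rémy formula: for all n ≥ 1 and f ≥ 1, (2+n−f)·Q(n,f) = 2(2n−1)·Q(n−1,f) + Σ_{i+j=n−1} Σ_{f1+f2=f, f1,f2≥1} (2+i−f1)·Q(i,f1)·(2+j−f2)·Q(j,f2); (iv) the dual formula: for all n, f, (n−f+1)·Q(n,f) = Σ_{i+j=n−1} Σ_{f1+f2=f+1, f1,f2≥1} (2i+1)·Q(i,f1)·f2·Q(j,f2). Then Q satisfies the planar Carrell–Chapuy formula: for all n ≥ 1, f ≥ 1, (n+1)·Q(n,f) = 2(2n−1)·Q(n−1,f) + 2(2n−1)·Q(n−1,f−1) + 3·Σ_{i+j=n−2} Σ_{f1+f2=f, f1,f2≥1} (2i+1)(2j+1)·Q(i,f1)·Q(j,f2). -/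

import Mathlib

/-- `Σ_{i+j=n−1, i,j≥0} Σ_{f1+f2=f, f1,f2≥1} (2+i−f1)·Q(i,f1)·(2j+1)·Q(j,f2)`,
the right-hand side of the cut-and-slide formula. -/
def csSum (Q : ℕ → ℕ → ℚ) (n f : ℕ) : ℚ :=
  ∑ i ∈ Finset.range (n + 1), ∑ j ∈ Finset.range (n + 1),
    ∑ f1 ∈ Finset.range (f + 1), ∑ f2 ∈ Finset.range (f + 1),
      if i + j + 1 = n ∧ f1 + f2 = f ∧ 1 ≤ f1 ∧ 1 ≤ f2 then
        (2 + (i : ℚ) - (f1 : ℚ)) * Q i f1 * (2 * (j : ℚ) + 1) * Q j f2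
      else 0

/-- `Σ_{i+j=n−1, i,j≥0} Σ_{f1+f2=f, f1,f2≥1} (2+i−f1)·Q(i,f1)·(2+j−f2)·Q(j,f2)`,
the quadratic term of the generalized Rémy formula. -/
def remySum (Q : ℕ → ℕ → ℚ) (n f : ℕ) : ℚ :=
  ∑ i ∈ Finset.range (n + 1), ∑ j ∈ Finset.range (n + 1),
    ∑ f1 ∈ Finset.range (f + 1), ∑ f2 ∈ Finset.range (f + 1),
      if i + j + 1 = n ∧ f1 + f2 = f ∧ 1 ≤ f1 ∧ 1 ≤ f2 then
        (2 + (i : ℚ) - (f1 : ℚ)) * Q i f1 * (2 + (j : ℚ) - (f2 : ℚ)) * Q j f2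
      else 0

/-- `Σ_{i+j=n−1, i,j≥0} Σ_{f1+f2=f+1, f1,f2≥1} (2i+1)·Q(i,f1)·f2·Q(j,f2)`,
the right-hand side of the dual cut-and-slide formula. -/
def dualSum (Q : ℕ → ℕ → ℚ) (n f : ℕ) : ℚ :=
  ∑ i ∈ Finset.range (n + 1), ∑ j ∈ Finset.range (n + 1),
    ∑ f1 ∈ Finset.range (f + 2), ∑ f2 ∈ Finset.range (f + 2),
      if i + j + 1 = n ∧ f1 + f2 = f + 1 ∧ 1 ≤ f1 ∧ 1 ≤ f2 then
        (2 * (i : ℚ) + 1) * Q i f1 * (f2 : ℚ) * Q j f2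
      else 0

/-- The quadratic term of the planar Carrell–Chapuy recurrence (without the factor 3):
`Σ_{i+j=n−2, i,j≥0} Σ_{f1+f2=f, f1,f2≥1} (2i+1)(2j+1)·Q(i,f1)·Q(j,f2)`. -/
def ccQuad (Q : ℕ → ℕ → ℚ) (n f : ℕ) : ℚ :=
  ∑ i ∈ Finset.range (n + 1), ∑ j ∈ Finset.range (n + 1),
    ∑ f1 ∈ Finset.range (f + 1), ∑ f2 ∈ Finset.range (f + 1),
      if i + j + 2 = n ∧ f1 + f2 = f ∧ 1 ≤ f1 ∧ 1 ≤ f2 then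
        (2 * (i : ℚ) + 1) * (2 * (j : ℚ) + 1) * Q i f1 * Q j f2
      else 0



namespace CCaux

open Finset PowerSeries

abbrev S : Type := PowerSeries (PowerSeries ℚ)

noncomputable def seq (c : ℕ → ℕ → ℚ) : S :=
  PowerSeries.mk fun n => PowerSeries.mk fun f => c n f

noncomputable def Cu : S := PowerSeries.C (R := PowerSeries ℚ) PowerSeries.X

/-- the `(n,f)` coefficient -/
noncomputable def c2 (φ : S) (n f : ℕ) : ℚ :=
  PowerSeries.coeff (R := ℚ) f (PowerSeries.coeff (R := PowerSeries ℚ) n φ)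

@[simp] lemma c2_seq (c : ℕ → ℕ → ℚ) (n f : ℕ) : c2 (seq c) n f = c n f := by
  simp [c2, seq]

@[simp] lemma c2_add (φ ψ : S) (n f : ℕ) : c2 (φ + ψ) n f = c2 φ n f + c2 ψ n f := by
  simp [c2]

lemma c2_ext {φ ψ : S} (h : ∀ n f, c2 φ n f = c2 ψ n f) : φ = ψ :=
  PowerSeries.ext fun n => PowerSeries.ext fun f => h n f

lemma c2_X_mul (φ : S) (n f : ℕ) :
    c2 (PowerSeries.X * φ) n f = if n = 0 then 0 else c2 φ (n - 1) f := by
  cases n with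
  | zero => simp [c2, PowerSeries.coeff_zero_X_mul]
  | succ m => simp [c2, PowerSeries.coeff_succ_X_mul]

lemma c2_Cu_mul (φ : S) (n f : ℕ) :
    c2 (Cu * φ) n f = if f = 0 then 0 else c2 φ n (f - 1) := by
  unfold c2 Cu
  rw [PowerSeries.coeff_C_mul]
  cases f with
  | zero => simp [PowerSeries.coeff_zero_X_mul]
  | succ g => simp [PowerSeries.coeff_succ_X_mul]

lemma c2_Cu (n f : ℕ) : c2 Cu n f = if n = 0 ∧ f = 1 then 1 else 0 := by
  unfold c2 Cu
  rw [PowerSeries.coeff_C]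
  by_cases hn : n = 0
  · simp [hn, PowerSeries.coeff_X]
  · simp [hn]

lemma range_if_sum (m N : ℕ) (hm : m < N) (h : ℕ → ℕ → ℚ) :
    (∑ i ∈ Finset.range N, ∑ j ∈ Finset.range N, if i + j = m then h i j else 0)
      = ∑ p ∈ Finset.HasAntidiagonal.antidiagonal m, h p.1 p.2 := by
  rw [Finset.Nat.sum_antidiagonal_eq_sum_range_succ_mk]
  have inner : ∀ i, (∑ j ∈ Finset.range N, if i + j = m then h i j else 0)
      = if i ≤ m then h i (m - i) else 0 := by
    intro i
    by_cases hi : i ≤ m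
    · rw [if_pos hi, Finset.sum_eq_single (m - i)]
      · rw [if_pos (by omega)]
      · intro j _ hj; rw [if_neg (by omega)]
      · intro hmem; exact absurd (Finset.mem_range.2 (by omega)) hmem
    · rw [if_neg hi]
      refine Finset.sum_eq_zero fun j _ => by rw [if_neg (by omega)]
  simp only [inner]
  rw [← Finset.sum_subset (Finset.range_subset_range.mpr hm)
      (fun i _ hi => by rw [if_neg (by simp only [Finset.mem_range] at hi; omega)])]
  exact Finset.sum_congr rfl fun i hi => by
    rw [if_pos (by simp only [Finset.mem_range] at hi; omega)]

lemma quad_if_sum (c d N M : ℕ) (hN : c < N) (hM : d < M) (h : ℕ → ℕ → ℕ → ℕ → ℚ) :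
    (∑ i ∈ Finset.range N, ∑ j ∈ Finset.range N, ∑ f1 ∈ Finset.range M, ∑ f2 ∈ Finset.range M,
        if i + j = c ∧ f1 + f2 = d then h i j f1 f2 else 0)
      = ∑ p ∈ Finset.HasAntidiagonal.antidiagonal c, ∑ q ∈ Finset.HasAntidiagonal.antidiagonal d, h p.1 p.2 q.1 q.2 := by
  have step1 : ∀ i j, (∑ f1 ∈ Finset.range M, ∑ f2 ∈ Finset.range M,
      if i + j = c ∧ f1 + f2 = d then h i j f1 f2 else 0)
      = if i + j = c then (∑ q ∈ Finset.HasAntidiagonal.antidiagonal d, h i j q.1 q.2) else 0 := by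
    intro i j
    by_cases hc : i + j = c
    · rw [if_pos hc, ← range_if_sum d M hM]
      refine Finset.sum_congr rfl fun f1 _ => Finset.sum_congr rfl fun f2 _ => ?_
      by_cases hd : f1 + f2 = d
      · rw [if_pos ⟨hc, hd⟩, if_pos hd]
      · rw [if_neg (fun hh => hd hh.2), if_neg hd]
    · rw [if_neg hc]
      refine Finset.sum_eq_zero fun f1 _ => Finset.sum_eq_zero fun f2 _ => ?_
      rw [if_neg (fun hh => hc hh.1)]
  simp only [step1]
  exact range_if_sum c N hN _

lemma c2_mul (φ ψ : S) (n f : ℕ) :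
    c2 (φ * ψ) n f = ∑ p ∈ Finset.HasAntidiagonal.antidiagonal n, ∑ q ∈ Finset.HasAntidiagonal.antidiagonal f,
      c2 φ p.1 q.1 * c2 ψ p.2 q.2 := by
  unfold c2
  rw [PowerSeries.coeff_mul, map_sum]
  exact Finset.sum_congr rfl fun p _ => by rw [PowerSeries.coeff_mul]

lemma bridge (c d N M : ℕ) (hN : c < N) (hM : d < M) (t : ℕ → ℕ → ℕ → ℕ → ℚ)
    (ht : ∀ i j f1 f2, f1 + f2 = d → ¬(1 ≤ f1 ∧ 1 ≤ f2) → t i j f1 f2 = 0) :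
    (∑ i ∈ Finset.range N, ∑ j ∈ Finset.range N, ∑ f1 ∈ Finset.range M, ∑ f2 ∈ Finset.range M,
        if i + j = c ∧ f1 + f2 = d ∧ 1 ≤ f1 ∧ 1 ≤ f2 then t i j f1 f2 else 0)
      = ∑ p ∈ Finset.HasAntidiagonal.antidiagonal c, ∑ q ∈ Finset.HasAntidiagonal.antidiagonal d, t p.1 p.2 q.1 q.2 := by
  rw [← quad_if_sum c d N M hN hM t]
  refine Finset.sum_congr rfl fun i _ => Finset.sum_congr rfl fun j _ =>
    Finset.sum_congr rfl fun f1 _ => Finset.sum_congr rfl fun f2 _ => ?_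
  by_cases h1 : i + j = c ∧ f1 + f2 = d
  · by_cases h2 : 1 ≤ f1 ∧ 1 ≤ f2
    · rw [if_pos ⟨h1.1, h1.2, h2.1, h2.2⟩, if_pos h1]
    · rw [if_neg (fun hh => h2 ⟨hh.2.2.1, hh.2.2.2⟩), if_pos h1, ht i j f1 f2 h1.2 h2]
  · rw [if_neg (fun hh => h1 ⟨hh.1, hh.2.1⟩), if_neg h1]


section
variable (Q : ℕ → ℕ → ℚ)

noncomputable def Am : S := seq fun n f => (2 + (n : ℚ) - (f : ℚ)) * Q n f
noncomputable def Bm : S := seq fun n f => (2 * (n : ℚ) + 1) * Q n f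
noncomputable def Em : S := seq fun n f => ((n : ℚ) + 1) * Q n f
noncomputable def Gm : S := seq fun n f => (f : ℚ) * Q n f

lemma csSum_zero (n : ℕ) : csSum Q n 0 = 0 := by
  unfold csSum
  exact Finset.sum_eq_zero fun i _ => Finset.sum_eq_zero fun j _ =>
    Finset.sum_eq_zero fun f1 _ => Finset.sum_eq_zero fun f2 _ => if_neg (by omega)

lemma remySum_zero (n : ℕ) : remySum Q n 0 = 0 := by
  unfold remySum
  exact Finset.sum_eq_zero fun i _ => Finset.sum_eq_zero fun j _ =>
    Finset.sum_eq_zero fun f1 _ => Finset.sum_eq_zero fun f2 _ => if_neg (by omega)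

lemma ccQuad_one (f : ℕ) : ccQuad Q 1 f = 0 := by
  unfold ccQuad
  exact Finset.sum_eq_zero fun i _ => Finset.sum_eq_zero fun j _ =>
    Finset.sum_eq_zero fun f1 _ => Finset.sum_eq_zero fun f2 _ => if_neg (by omega)

lemma c2_AB (hzero : ∀ n, Q n 0 = 0) (m f : ℕ) : c2 (Am Q * Bm Q) m f = csSum Q (m + 1) f := by
  rw [c2_mul]
  have hb := bridge m f (m + 1 + 1) (f + 1) (by omega) (by omega)
      (fun i j f1 f2 => (2 + (i : ℚ) - (f1 : ℚ)) * Q i f1 * (2 * (j : ℚ) + 1) * Q j f2)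
      (by intro i j f1 f2 hd hno
          rcases Nat.eq_zero_or_pos f1 with h | h
          · subst h; simp [hzero]
          · have h2 : f2 = 0 := by omega
            subst h2; simp [hzero])
  have h1 : (∑ p ∈ Finset.HasAntidiagonal.antidiagonal m, ∑ q ∈ Finset.HasAntidiagonal.antidiagonal f,
        c2 (Am Q) p.1 q.1 * c2 (Bm Q) p.2 q.2)
      = ∑ p ∈ Finset.HasAntidiagonal.antidiagonal m, ∑ q ∈ Finset.HasAntidiagonal.antidiagonal f,
        (2 + (p.1 : ℚ) - (q.1 : ℚ)) * Q p.1 q.1 * (2 * (p.2 : ℚ) + 1) * Q p.2 q.2 := by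
    refine Finset.sum_congr rfl fun p _ => Finset.sum_congr rfl fun q _ => ?_
    simp only [Am, Bm, c2_seq]; ring
  rw [h1, ← hb]
  unfold csSum
  exact Finset.sum_congr rfl fun i _ => Finset.sum_congr rfl fun j _ =>
    Finset.sum_congr rfl fun f1 _ => Finset.sum_congr rfl fun f2 _ =>
      if_congr (by omega) rfl rfl

lemma c2_AA (hzero : ∀ n, Q n 0 = 0) (m f : ℕ) : c2 (Am Q * Am Q) m f = remySum Q (m + 1) f := by
  rw [c2_mul]
  have hb := bridge m f (m + 1 + 1) (f + 1) (by omega) (by omega)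
      (fun i j f1 f2 => (2 + (i : ℚ) - (f1 : ℚ)) * Q i f1 * (2 + (j : ℚ) - (f2 : ℚ)) * Q j f2)
      (by intro i j f1 f2 hd hno
          rcases Nat.eq_zero_or_pos f1 with h | h
          · subst h; simp [hzero]
          · have h2 : f2 = 0 := by omega
            subst h2; simp [hzero])
  have h1 : (∑ p ∈ Finset.HasAntidiagonal.antidiagonal m, ∑ q ∈ Finset.HasAntidiagonal.antidiagonal f,
        c2 (Am Q) p.1 q.1 * c2 (Am Q) p.2 q.2)
      = ∑ p ∈ Finset.HasAntidiagonal.antidiagonal m, ∑ q ∈ Finset.HasAntidiagonal.antidiagonal f,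
        (2 + (p.1 : ℚ) - (q.1 : ℚ)) * Q p.1 q.1 * (2 + (p.2 : ℚ) - (q.2 : ℚ)) * Q p.2 q.2 := by
    refine Finset.sum_congr rfl fun p _ => Finset.sum_congr rfl fun q _ => ?_
    simp only [Am, c2_seq]; ring
  rw [h1, ← hb]
  unfold remySum
  exact Finset.sum_congr rfl fun i _ => Finset.sum_congr rfl fun j _ =>
    Finset.sum_congr rfl fun f1 _ => Finset.sum_congr rfl fun f2 _ =>
      if_congr (by omega) rfl rfl

lemma c2_BG (hzero : ∀ n, Q n 0 = 0) (m g : ℕ) : c2 (Bm Q * Gm Q) m (g + 1) = dualSum Q (m + 1) g := by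
  rw [c2_mul]
  have hb := bridge m (g + 1) (m + 1 + 1) (g + 2) (by omega) (by omega)
      (fun i j f1 f2 => (2 * (i : ℚ) + 1) * Q i f1 * (f2 : ℚ) * Q j f2)
      (by intro i j f1 f2 hd hno
          rcases Nat.eq_zero_or_pos f1 with h | h
          · subst h; simp [hzero]
          · have h2 : f2 = 0 := by omega
            subst h2; simp)
  have h1 : (∑ p ∈ Finset.HasAntidiagonal.antidiagonal m, ∑ q ∈ Finset.HasAntidiagonal.antidiagonal (g + 1),
        c2 (Bm Q) p.1 q.1 * c2 (Gm Q) p.2 q.2)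
      = ∑ p ∈ Finset.HasAntidiagonal.antidiagonal m, ∑ q ∈ Finset.HasAntidiagonal.antidiagonal (g + 1),
        (2 * (p.1 : ℚ) + 1) * Q p.1 q.1 * (q.2 : ℚ) * Q p.2 q.2 := by
    refine Finset.sum_congr rfl fun p _ => Finset.sum_congr rfl fun q _ => ?_
    simp only [Bm, Gm, c2_seq]; ring
  rw [h1, ← hb]
  unfold dualSum
  exact Finset.sum_congr rfl fun i _ => Finset.sum_congr rfl fun j _ =>
    Finset.sum_congr rfl fun f1 _ => Finset.sum_congr rfl fun f2 _ =>
      if_congr (by omega) rfl rfl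

lemma c2_BB (hzero : ∀ n, Q n 0 = 0) (k f : ℕ) : c2 (Bm Q * Bm Q) k f = ccQuad Q (k + 2) f := by
  rw [c2_mul]
  have hb := bridge k f (k + 2 + 1) (f + 1) (by omega) (by omega)
      (fun i j f1 f2 => (2 * (i : ℚ) + 1) * (2 * (j : ℚ) + 1) * Q i f1 * Q j f2)
      (by intro i j f1 f2 hd hno
          rcases Nat.eq_zero_or_pos f1 with h | h
          · subst h; simp [hzero]
          · have h2 : f2 = 0 := by omega
            subst h2; simp [hzero])
  have h1 : (∑ p ∈ Finset.HasAntidiagonal.antidiagonal k, ∑ q ∈ Finset.HasAntidiagonal.antidiagonal f,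
        c2 (Bm Q) p.1 q.1 * c2 (Bm Q) p.2 q.2)
      = ∑ p ∈ Finset.HasAntidiagonal.antidiagonal k, ∑ q ∈ Finset.HasAntidiagonal.antidiagonal f,
        (2 * (p.1 : ℚ) + 1) * (2 * (p.2 : ℚ) + 1) * Q p.1 q.1 * Q p.2 q.2 := by
    refine Finset.sum_congr rfl fun p _ => Finset.sum_congr rfl fun q _ => ?_
    simp only [Bm, c2_seq]; ring
  rw [h1, ← hb]
  unfold ccQuad
  exact Finset.sum_congr rfl fun i _ => Finset.sum_congr rfl fun j _ =>
    Finset.sum_congr rfl fun f1 _ => Finset.sum_congr rfl fun f2 _ =>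
      if_congr (by omega) rfl rfl

lemma series_I (hzero : ∀ n, Q n 0 = 0) (hinit : ∀ f, Q 0 f = if f = 1 then 1 else 0)
    (hcs : ∀ (n f : ℕ), 1 ≤ f → ((f : ℚ) - 1) * Q n f = csSum Q n f) :
    Em Q = Am Q + PowerSeries.X * (Am Q * Bm Q) := by
  refine c2_ext fun n f => ?_
  rw [c2_add, c2_X_mul]
  cases n with
  | zero =>
    simp only [if_pos rfl, add_zero, Em, Am, c2_seq]
    rw [hinit f]
    by_cases hf : f = 1
    · subst hf; norm_num
    · simp [hf]
  | succ m =>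
    rw [if_neg (Nat.succ_ne_zero m), Nat.add_sub_cancel, c2_AB Q hzero m f]
    by_cases hf : 1 ≤ f
    · have h := hcs (m + 1) f hf
      simp only [Em, Am, c2_seq]
      push_cast at h ⊢
      linear_combination h
    · have hf0 : f = 0 := by omega
      subst hf0
      simp [Em, Am, c2_seq, hzero, csSum_zero]

lemma series_II (hzero : ∀ n, Q n 0 = 0) (hinit : ∀ f, Q 0 f = if f = 1 then 1 else 0)
    (hremy : ∀ (n f : ℕ), 1 ≤ n → 1 ≤ f →
      (2 + (n : ℚ) - (f : ℚ)) * Q n f =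
        2 * (2 * (n : ℚ) - 1) * Q (n - 1) f + remySum Q n f) :
    Am Q = Cu + (PowerSeries.X * Bm Q + PowerSeries.X * Bm Q)
        + PowerSeries.X * (Am Q * Am Q) := by
  refine c2_ext fun n f => ?_
  rw [c2_add, c2_add, c2_add, c2_X_mul, c2_X_mul, c2_Cu]
  cases n with
  | zero =>
    simp only [if_pos rfl, add_zero, Am, c2_seq]
    rw [hinit f]
    by_cases hf : f = 1
    · subst hf; norm_num
    · simp [hf]
  | succ m =>
    rw [if_neg (Nat.succ_ne_zero m), if_neg (Nat.succ_ne_zero m),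
        Nat.add_sub_cancel, c2_AA Q hzero m f]
    have hc : ¬(m + 1 = 0 ∧ f = 1) := by omega
    rw [if_neg hc]
    by_cases hf : 1 ≤ f
    · have h := hremy (m + 1) f (by omega) hf
      rw [Nat.add_sub_cancel] at h
      simp only [Am, Bm, c2_seq]
      push_cast at h ⊢
      linear_combination h
    · have hf0 : f = 0 := by omega
      subst hf0
      simp [Am, Bm, c2_seq, hzero, remySum_zero]

lemma series_III (hzero : ∀ n, Q n 0 = 0) (hinit : ∀ f, Q 0 f = if f = 1 then 1 else 0)
    (hdual : ∀ (n f : ℕ), ((n : ℚ) - (f : ℚ) + 1) * Q n f = dualSum Q n f) :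
    Cu * Em Q = Cu * Gm Q + PowerSeries.X * (Bm Q * Gm Q) := by
  refine c2_ext fun n f => ?_
  rw [c2_add, c2_Cu_mul, c2_Cu_mul, c2_X_mul]
  cases f with
  | zero =>
    rw [if_pos rfl, if_pos rfl, zero_add]
    cases n with
    | zero => rw [if_pos rfl]
    | succ m =>
      rw [if_neg (Nat.succ_ne_zero m), Nat.add_sub_cancel, c2_mul]
      refine (Finset.sum_eq_zero fun p _ => Finset.sum_eq_zero fun q hq => ?_).symm
      have hq2 : q.2 = 0 := by
        have := Finset.HasAntidiagonal.mem_antidiagonal.mp hq; omega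
      simp [Gm, c2_seq, hq2]
  | succ g =>
    rw [if_neg (Nat.succ_ne_zero g), if_neg (Nat.succ_ne_zero g), Nat.add_sub_cancel]
    cases n with
    | zero =>
      rw [if_pos rfl, add_zero]
      simp only [Em, Gm, c2_seq]
      rw [hinit g]
      by_cases hg : g = 1
      · subst hg; norm_num
      · rw [if_neg hg]; ring
    | succ m =>
      rw [if_neg (Nat.succ_ne_zero m), Nat.add_sub_cancel, c2_BG Q hzero m g]
      have h := hdual (m + 1) g
      simp only [Em, Gm, c2_seq]
      push_cast at h ⊢
      linear_combination h

lemma series_L : Bm Q + Am Q + Gm Q = Em Q + Em Q + Em Q := by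
  refine c2_ext fun n f => ?_
  simp only [c2_add, Am, Bm, Em, Gm, c2_seq]
  ring

end

end CCaux

theorem cc_from_cut_slide_remy_dual (Q : ℕ → ℕ → ℚ)
    (hinit : ∀ f, Q 0 f = if f = 1 then 1 else 0)
    (hzero : ∀ n, Q n 0 = 0)
    (hcs : ∀ (n f : ℕ), 1 ≤ f → ((f : ℚ) - 1) * Q n f = csSum Q n f)
    (hremy : ∀ (n f : ℕ), 1 ≤ n → 1 ≤ f →
      (2 + (n : ℚ) - (f : ℚ)) * Q n f =
        2 * (2 * (n : ℚ) - 1) * Q (n - 1) f + remySum Q n f)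
    (hdual : ∀ (n f : ℕ), ((n : ℚ) - (f : ℚ) + 1) * Q n f = dualSum Q n f) :
    ∀ (n f : ℕ), 1 ≤ n → 1 ≤ f →
      ((n : ℚ) + 1) * Q n f =
        2 * (2 * (n : ℚ) - 1) * Q (n - 1) f + 2 * (2 * (n : ℚ) - 1) * Q (n - 1) (f - 1) +
          3 * ccQuad Q n f := by
  classical
  open CCaux PowerSeries in
  have hI := CCaux.series_I Q hzero hinit hcs
  have hII := CCaux.series_II Q hzero hinit hremy
  have hIII := CCaux.series_III Q hzero hinit hdual
  have hL := CCaux.series_L Q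
  set A := CCaux.Am Q with hAdef
  set B := CCaux.Bm Q with hBdef
  set E := CCaux.Em Q with hEdef
  set G := CCaux.Gm Q with hGdef
  have hD : CCaux.Cu * A - CCaux.Cu * B + 2 * (PowerSeries.X * ((CCaux.Cu + 1) * (A * B)))
      + 3 * (PowerSeries.X * (PowerSeries.X * (A * (B * B)))) - PowerSeries.X * (B * B) = 0 := by
    linear_combination (-1 : CCaux.S) * hIII + (-(CCaux.Cu + PowerSeries.X * B)) * hL
      + (-(2 * CCaux.Cu + 3 * PowerSeries.X * B)) * hI
  have hPhiMul : (A * A + A * B - 2 * (CCaux.Cu * B) - 3 * (PowerSeries.X * (B * B)))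
      * (1 - PowerSeries.X * A) = 0 := by
    linear_combination hD + (A + B) * hII
  have hinv := PowerSeries.mul_invOfUnit (1 - PowerSeries.X * A) 1 (by simp)
  have hPhi : A * A + A * B - 2 * (CCaux.Cu * B) - 3 * (PowerSeries.X * (B * B)) = 0 := by
    have h2 := congrArg
      (fun ψ => ψ * PowerSeries.invOfUnit (1 - PowerSeries.X * A) 1) hPhiMul
    simpa [mul_assoc, hinv] using h2
  have hfinal : E = CCaux.Cu + (PowerSeries.X * B + PowerSeries.X * B)
      + (PowerSeries.X * (CCaux.Cu * B) + PowerSeries.X * (CCaux.Cu * B))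
      + (PowerSeries.X * (PowerSeries.X * (B * B)) + PowerSeries.X * (PowerSeries.X * (B * B))
        + PowerSeries.X * (PowerSeries.X * (B * B))) := by
    linear_combination hI + hII + PowerSeries.X * hPhi
  intro n f hn hf
  obtain ⟨m, rfl⟩ : ∃ m, n = m + 1 := ⟨n - 1, by omega⟩
  obtain ⟨g, rfl⟩ : ∃ g, f = g + 1 := ⟨f - 1, by omega⟩
  have hc := congrArg (fun φ => CCaux.c2 φ (m + 1) (g + 1)) hfinal
  simp only [CCaux.c2_add, CCaux.c2_X_mul, CCaux.c2_Cu_mul, CCaux.c2_Cu,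
    Nat.succ_ne_zero, if_false, Nat.add_sub_cancel] at hc
  have hquad : (if m = 0 then (0 : ℚ) else CCaux.c2 (B * B) (m - 1) (g + 1))
      = ccQuad Q (m + 1) (g + 1) := by
    cases m with
    | zero => rw [if_pos rfl, CCaux.ccQuad_one]
    | succ k =>
      rw [if_neg (Nat.succ_ne_zero k), Nat.add_sub_cancel, hBdef,
        CCaux.c2_BB Q hzero k (g + 1)]
  rw [hquad] at hc
  simp only [false_and, if_false] at hc
  simp only [hEdef, hBdef, CCaux.Em, CCaux.Bm, CCaux.c2_seq, Nat.add_sub_cancel] at hc ⊢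
  push_cast at hc ⊢
  linear_combination hc
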